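/- arXiv:2512.20562 — 3 statements merged into one kernel-verified Lean document; each statement's English description precedes it below -/
import Mathlib

section
/- Let d ≥ 2 and let p be a real polynomial in d variables that is homogeneous of degree n. Then there exist harmonic polynomials h_{n−2i}, each homogeneous of degree n−2i for i = 0, 1, …, ⌊n/2⌋, such that p(x) = Σ_{i=0}^{⌊n/2⌋} h_{n−2i}(x) for every x ∈ ℝ^d with ‖x‖ = 1; moreover, the polynomials h_{n−2i} with this property are unique. -/
open MvPolynomial

/-- The Laplacian `Δp = Σ_j ∂²p/∂x_j²` of a multivariate polynomial. -/
noncomputable def mvLaplacian {d : ℕ} (p : MvPolynomial (Fin d) ℝ) : MvPolynomial (Fin d) ℝ :=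
  ∑ j : Fin d, pderiv j (pderiv j p)

section Aux
open Finset

noncomputable section
variable {d : ℕ}

/-- `‖x‖²` as a polynomial. -/
def rsq (d : ℕ) : MvPolynomial (Fin d) ℝ := ∑ j : Fin d, X j ^ 2

lemma eval_rsq (x : Fin d → ℝ) : eval x (rsq d) = ∑ j, x j ^ 2 := by
  simp [rsq]

lemma rsq_isHomogeneous : (rsq d).IsHomogeneous 2 := by
  apply IsHomogeneous.sum
  intro j _
  simpa using (isHomogeneous_X ℝ j).pow 2

lemma mvLap_add (p q : MvPolynomial (Fin d) ℝ) :
    mvLaplacian (p + q) = mvLaplacian p + mvLaplacian q := by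
  simp [mvLaplacian, Finset.sum_add_distrib]

lemma mvLap_smul (c : ℝ) (p : MvPolynomial (Fin d) ℝ) :
    mvLaplacian (c • p) = c • mvLaplacian p := by
  simp [mvLaplacian, Finset.smul_sum]

lemma mvLap_neg (p : MvPolynomial (Fin d) ℝ) : mvLaplacian (-p) = - mvLaplacian p := by
  simp [mvLaplacian, ← Finset.sum_neg_distrib]

lemma degree_eq_sum (v : Fin d →₀ ℕ) : v.degree = ∑ j : Fin d, v j := by
  rw [Finsupp.degree]
  exact Finset.sum_subset (Finset.subset_univ _) (by simp)

lemma degree_of_coeff_ne_zero {p : MvPolynomial (Fin d) ℝ} {n : ℕ} (hp : p.IsHomogeneous n)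
    {v : Fin d →₀ ℕ} (hv : coeff v p ≠ 0) : v.degree = n := by
  by_contra h
  exact hv (hp.coeff_eq_zero h)

lemma sub_single_add {v : Fin d →₀ ℕ} {j : Fin d} (h : v j ≠ 0) :
    Finsupp.single j 1 + (v - Finsupp.single j 1) = v := by
  ext k
  rw [Finsupp.add_apply, Finsupp.tsub_apply]
  rcases eq_or_ne j k with rfl | hk
  · rw [Finsupp.single_eq_same]; omega
  · rw [Finsupp.single_eq_of_ne' hk]; omega

lemma degree_sub_single {v : Fin d →₀ ℕ} {j : Fin d} (h : v j ≠ 0) :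
    (v - Finsupp.single j 1).degree = v.degree - 1 := by
  set w : Fin d →₀ ℕ := v - Finsupp.single j 1 with hw
  rw [degree_eq_sum, degree_eq_sum]
  have h1 : ∑ k : Fin d, w k
      = ∑ k : Fin d, (v k - (if j = k then 1 else 0)) := by
    apply Finset.sum_congr rfl
    intro k _
    rw [hw, Finsupp.tsub_apply, Finsupp.single_apply]
  rw [h1, Finset.sum_tsub_distrib _
    (by intro k _; split_ifs with hjk; · subst hjk; omega
        · omega)]
  congr 1
  simp

lemma isHomog_pderiv {n : ℕ} {p : MvPolynomial (Fin d) ℝ} (hp : p.IsHomogeneous n)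
    (j : Fin d) : (pderiv j p).IsHomogeneous (n - 1) := by
  conv_lhs => rw [p.as_sum]
  rw [map_sum]
  apply IsHomogeneous.sum
  intro v hv
  rw [pderiv_monomial]
  by_cases h : v j = 0
  · simp only [h, Nat.cast_zero, mul_zero, map_zero]
    exact isHomogeneous_zero _ _ _
  · apply isHomogeneous_monomial
    rw [degree_sub_single h, degree_of_coeff_ne_zero hp (mem_support_iff.mp hv)]

lemma mvLap_isHomogeneous {n : ℕ} {p : MvPolynomial (Fin d) ℝ} (hp : p.IsHomogeneous n) :
    (mvLaplacian p).IsHomogeneous (n - 2) := by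
  apply IsHomogeneous.sum
  intro j _
  have := isHomog_pderiv (isHomog_pderiv hp j) j
  rwa [Nat.sub_sub] at this

lemma euler {m : ℕ} {q : MvPolynomial (Fin d) ℝ} (hq : q.IsHomogeneous m) :
    ∑ j : Fin d, X j * pderiv j q = (m : ℝ) • q := by
  conv_lhs => rw [q.as_sum]
  conv_rhs => rw [q.as_sum]
  rw [Finset.smul_sum]
  have h1 : ∀ j : Fin d, X j * pderiv j (∑ v ∈ q.support, monomial v (coeff v q))
      = ∑ v ∈ q.support, X j * monomial (v - Finsupp.single j 1) (coeff v q * (v j : ℝ)) := by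
    intro j
    rw [map_sum, Finset.mul_sum]
    apply Finset.sum_congr rfl
    intro v _
    rw [pderiv_monomial]
  simp only [h1]
  rw [Finset.sum_comm]
  apply Finset.sum_congr rfl
  intro v hv
  have hvd : v.degree = m := degree_of_coeff_ne_zero hq (mem_support_iff.mp hv)
  have step : ∀ j : Fin d, X j * monomial (v - Finsupp.single j 1) (coeff v q * (v j : ℝ))
      = monomial v (coeff v q * (v j : ℝ)) := by
    intro j
    by_cases h : v j = 0
    · simp [h]
    · rw [X, monomial_mul, one_mul, sub_single_add h]
  simp only [step]
  have hms : (∑ i : Fin d, ((v i : ℝ))) = (m : ℝ) := by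
    rw [← Nat.cast_sum, ← degree_eq_sum, hvd]
  rw [← map_sum, ← Finset.mul_sum, smul_monomial, smul_eq_mul, mul_comm, hms]

lemma C_two : (C (2:ℝ) : MvPolynomial (Fin d) ℝ) = 2 := by
  rw [show (2:ℝ) = ((2:ℕ):ℝ) by norm_num, map_natCast]
  norm_num

lemma C_four : (C (4:ℝ) : MvPolynomial (Fin d) ℝ) = 4 := by
  rw [show (4:ℝ) = ((4:ℕ):ℝ) by norm_num, map_natCast]
  norm_num

lemma pderiv_rsq (j : Fin d) : pderiv j (rsq d) = C 2 * X j := by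
  rw [rsq, map_sum]
  rw [Finset.sum_eq_single j (fun k _ hk => by
    rw [pderiv_pow, pderiv_X_of_ne hk, mul_zero]) (by simp)]
  rw [pderiv_pow, pderiv_X_self, C_two]
  ring

lemma mvLap_rsq_mul {m : ℕ} {q : MvPolynomial (Fin d) ℝ} (hq : q.IsHomogeneous m) :
    mvLaplacian (rsq d * q)
      = (((2 * d + 4 * m : ℕ)) : MvPolynomial (Fin d) ℝ) * q + rsq d * mvLaplacian q := by
  have hj : ∀ j : Fin d, pderiv j (pderiv j (rsq d * q))
      = C 2 * q + C 4 * (X j * pderiv j q) + rsq d * pderiv j (pderiv j q) := by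
    intro j
    rw [pderiv_mul, pderiv_rsq, map_add, pderiv_mul, pderiv_mul, pderiv_mul, pderiv_rsq,
      pderiv_C, pderiv_X_self, C_two, C_four]
    ring
  rw [mvLaplacian]
  simp only [hj]
  rw [Finset.sum_add_distrib, Finset.sum_add_distrib, Finset.sum_const, ← Finset.mul_sum,
    ← Finset.mul_sum, euler hq, Finset.card_univ, Fintype.card_fin]
  rw [← mvLaplacian, nsmul_eq_mul, smul_eq_C_mul, map_natCast, C_two, C_four]
  push_cast
  ring

lemma mvLap_zero : mvLaplacian (0 : MvPolynomial (Fin d) ℝ) = 0 := by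
  simp [mvLaplacian]

lemma pderiv_eq_zero_of_homog_zero {q : MvPolynomial (Fin d) ℝ} (hq : q.IsHomogeneous 0)
    (j : Fin d) : pderiv j q = 0 := by
  conv_lhs => rw [q.as_sum]
  rw [map_sum]
  apply Finset.sum_eq_zero
  intro v hv
  have h0 : v.degree = 0 := degree_of_coeff_ne_zero hq (mem_support_iff.mp hv)
  have hv0 : v = 0 := by rwa [Finsupp.degree_eq_zero_iff] at h0
  rw [pderiv_monomial, hv0]
  simp

lemma mvLap_eq_zero_of_le_one {m : ℕ} {p : MvPolynomial (Fin d) ℝ} (hm : m ≤ 1)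
    (hp : p.IsHomogeneous m) : mvLaplacian p = 0 := by
  rw [mvLaplacian]
  apply Finset.sum_eq_zero
  intro j _
  have h1 : (pderiv j p).IsHomogeneous 0 := by
    have := isHomog_pderiv hp j
    rwa [show m - 1 = 0 by omega] at this
  rw [pderiv_eq_zero_of_homog_zero h1 j]

lemma natCast_mul_eq_smul (K : ℕ) (s : MvPolynomial (Fin d) ℝ) :
    ((K : MvPolynomial (Fin d) ℝ)) * s = ((K : ℝ)) • s := by
  rw [smul_eq_C_mul, map_natCast]

lemma smul_eq_zero' {c : ℝ} (hc : c ≠ 0) {q : MvPolynomial (Fin d) ℝ} (h : c • q = 0) :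
    q = 0 := by
  have h2 := congrArg (c⁻¹ • ·) h
  simpa [smul_smul, inv_mul_cancel₀ hc] using h2

lemma cancel_lemma : ∀ m : ℕ, ∀ q : MvPolynomial (Fin d) ℝ, q.IsHomogeneous m → ∀ c : ℝ,
    0 < c → c • q + rsq d * mvLaplacian q = 0 → q = 0 := by
  intro m
  induction m using Nat.strong_induction_on with
  | _ m ih =>
    intro q hq c hc heq
    by_cases hm : m ≤ 1
    · rw [mvLap_eq_zero_of_le_one hm hq, mul_zero, add_zero] at heq
      exact smul_eq_zero' (ne_of_gt hc) heq
    · push_neg at hm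
      have hsh : (mvLaplacian q).IsHomogeneous (m - 2) := mvLap_isHomogeneous hq
      have happ := congrArg mvLaplacian heq
      rw [mvLap_add, mvLap_smul, mvLap_rsq_mul hsh, mvLap_zero] at happ
      rw [natCast_mul_eq_smul] at happ
      have h2 : (c + ((2 * d + 4 * (m - 2) : ℕ) : ℝ)) • mvLaplacian q
          + rsq d * mvLaplacian (mvLaplacian q) = 0 := by
        rw [add_smul, add_assoc]
        exact happ
      have hs0 : mvLaplacian q = 0 := by
        refine ih (m - 2) (by omega) _ hsh _ ?_ h2
        have : (0:ℝ) ≤ ((2 * d + 4 * (m - 2) : ℕ) : ℝ) := Nat.cast_nonneg _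
        linarith
      rw [hs0, mul_zero, add_zero] at heq
      exact smul_eq_zero' (ne_of_gt hc) heq

lemma harmonic_rsq_mul (hd : 1 ≤ d) {m : ℕ} {q : MvPolynomial (Fin d) ℝ}
    (hq : q.IsHomogeneous m) (h : mvLaplacian (rsq d * q) = 0) : q = 0 := by
  rw [mvLap_rsq_mul hq, natCast_mul_eq_smul] at h
  refine cancel_lemma m q hq _ ?_ h
  have : 0 < 2 * d + 4 * m := by omega
  exact_mod_cast Nat.cast_pos.mpr this

lemma mvLap_sub (p q : MvPolynomial (Fin d) ℝ) :
    mvLaplacian (p - q) = mvLaplacian p - mvLaplacian q := by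
  simp [mvLaplacian, map_sub, Finset.sum_sub_distrib]

lemma lap_rsq_surjective (hd : 1 ≤ d) (m : ℕ) {r : MvPolynomial (Fin d) ℝ}
    (hr : r.IsHomogeneous m) :
    ∃ q : MvPolynomial (Fin d) ℝ, q.IsHomogeneous m ∧ mvLaplacian (rsq d * q) = r := by
  have hFD : FiniteDimensional ℝ (homogeneousSubmodule (Fin d) ℝ m) := by
    have hle : homogeneousSubmodule (Fin d) ℝ m ≤ restrictTotalDegree (Fin d) ℝ m := by
      intro p hp
      rw [mem_restrictTotalDegree]
      exact ((mem_homogeneousSubmodule _ _).mp hp).totalDegree_le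
    exact Submodule.finiteDimensional_of_le hle
  have hmem : ∀ q : homogeneousSubmodule (Fin d) ℝ m,
      mvLaplacian (rsq d * (q : MvPolynomial (Fin d) ℝ)) ∈ homogeneousSubmodule (Fin d) ℝ m := by
    intro q
    rw [mem_homogeneousSubmodule]
    have h1 : ((rsq d) * (q : MvPolynomial (Fin d) ℝ)).IsHomogeneous (2 + m) :=
      rsq_isHomogeneous.mul ((mem_homogeneousSubmodule _ _).mp q.2)
    have h2 := mvLap_isHomogeneous h1
    rwa [show 2 + m - 2 = m by omega] at h2
  let T : homogeneousSubmodule (Fin d) ℝ m →ₗ[ℝ] homogeneousSubmodule (Fin d) ℝ m :=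
    { toFun := fun q => ⟨mvLaplacian (rsq d * (q : MvPolynomial (Fin d) ℝ)), hmem q⟩
      map_add' := by
        intro a b
        ext
        simp [mul_add, mvLap_add]
      map_smul' := by
        intro c a
        ext
        simp [mul_smul_comm, mvLap_smul] }
  have hinj : Function.Injective T := by
    intro a b hab
    have hval : mvLaplacian (rsq d * (a : MvPolynomial (Fin d) ℝ))
        = mvLaplacian (rsq d * (b : MvPolynomial (Fin d) ℝ)) :=
      Subtype.ext_iff.mp hab
    have h0 : mvLaplacian (rsq d * ((a : MvPolynomial (Fin d) ℝ) - (b : MvPolynomial (Fin d) ℝ))) = 0 := by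
      rw [mul_sub, mvLap_sub, hval, sub_self]
    have hab2 : ((a : MvPolynomial (Fin d) ℝ) - (b : MvPolynomial (Fin d) ℝ)).IsHomogeneous m :=
      ((mem_homogeneousSubmodule _ _).mp a.2).sub ((mem_homogeneousSubmodule _ _).mp b.2)
    have := harmonic_rsq_mul hd hab2 h0
    exact Subtype.ext (by rwa [← sub_eq_zero])
  obtain ⟨q, hq⟩ := (LinearMap.injective_iff_surjective).mp hinj ⟨r, hr⟩
  exact ⟨(q : MvPolynomial (Fin d) ℝ), (mem_homogeneousSubmodule _ _).mp q.2,
    Subtype.ext_iff.mp hq⟩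

lemma exists_decomp (hd : 1 ≤ d) : ∀ n : ℕ, ∀ p : MvPolynomial (Fin d) ℝ, p.IsHomogeneous n →
    ∃ h : ℕ → MvPolynomial (Fin d) ℝ,
      (∀ i ≤ n / 2, (h i).IsHomogeneous (n - 2 * i) ∧ mvLaplacian (h i) = 0) ∧
      p = ∑ i ∈ Finset.range (n / 2 + 1), rsq d ^ i * h i := by
  intro n
  induction n using Nat.strong_induction_on with
  | _ n ih =>
    intro p hp
    by_cases hn : n ≤ 1
    · refine ⟨fun _ => p, ?_, ?_⟩
      · intro i hi
        have hi0 : i = 0 := by omega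
        subst hi0
        exact ⟨by simpa using hp, mvLap_eq_zero_of_le_one hn hp⟩
      · have h2 : n / 2 = 0 := by omega
        rw [h2]
        simp
    · push_neg at hn
      have hΔ : (mvLaplacian p).IsHomogeneous (n - 2) := mvLap_isHomogeneous hp
      obtain ⟨q, hqh, hqe⟩ := lap_rsq_surjective hd (n - 2) hΔ
      obtain ⟨g, hg1, hg2⟩ := ih (n - 2) (by omega) q hqh
      have hrange : (n - 2) / 2 + 1 = n / 2 := by omega
      refine ⟨fun i => if i = 0 then p - rsq d * q else g (i - 1), ?_, ?_⟩
      · intro i hi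
        dsimp only
        rcases Nat.eq_zero_or_pos i with rfl | hipos
        · rw [if_pos rfl]
          constructor
          · have h1 : (rsq d * q).IsHomogeneous n := by
              have h3 := rsq_isHomogeneous.mul hqh
              rwa [show 2 + (n - 2) = n by omega] at h3
            simpa using hp.sub h1
          · rw [mvLap_sub, hqe, sub_self]
        · have hipred : i - 1 ≤ (n - 2) / 2 := by omega
          obtain ⟨hh, hl⟩ := hg1 (i - 1) hipred
          rw [if_neg (by omega)]
          refine ⟨?_, hl⟩
          rwa [show (n - 2) - 2 * (i - 1) = n - 2 * i by omega] at hh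
      · rw [Finset.sum_range_succ']
        have hterm : ∀ i, rsq d ^ (i + 1) *
            (if i + 1 = 0 then p - rsq d * q else g (i + 1 - 1))
            = rsq d * (rsq d ^ i * g i) := by
          intro i
          rw [if_neg (Nat.succ_ne_zero i)]
          simp only [Nat.add_sub_cancel]
          rw [pow_succ]
          ring
        simp only [hterm]
        rw [← Finset.mul_sum, show n / 2 = (n - 2) / 2 + 1 from hrange.symm, ← hg2]
        simp

lemma decomp_unique (hd : 1 ≤ d) : ∀ n : ℕ, ∀ g : ℕ → MvPolynomial (Fin d) ℝ,
    (∀ i ≤ n / 2, (g i).IsHomogeneous (n - 2 * i) ∧ mvLaplacian (g i) = 0) →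
    (∑ i ∈ Finset.range (n / 2 + 1), rsq d ^ i * g i) = 0 →
    ∀ i ≤ n / 2, g i = 0 := by
  intro n
  induction n using Nat.strong_induction_on with
  | _ n ih =>
    intro g hg hsum
    by_cases hn : n ≤ 1
    · intro i hi
      have h0 : n / 2 = 0 := by omega
      have hi0 : i = 0 := by omega
      subst hi0
      rw [h0] at hsum
      simpa using hsum
    · push_neg at hn
      have hrange : (n - 2) / 2 + 1 = n / 2 := by omega
      set Q : MvPolynomial (Fin d) ℝ := ∑ i ∈ Finset.range (n / 2), rsq d ^ i * g (i + 1)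
        with hQ
      have hsum2 : g 0 + rsq d * Q = 0 := by
        rw [Finset.sum_range_succ'] at hsum
        rw [hQ, Finset.mul_sum]
        rw [← hsum]
        rw [add_comm]
        congr 1
        · apply Finset.sum_congr rfl
          intro i _
          rw [pow_succ]
          ring
        · rw [pow_zero, one_mul]
      have hQh : Q.IsHomogeneous (n - 2) := by
        apply IsHomogeneous.sum
        intro i hi
        rw [Finset.mem_range] at hi
        have h1 := (hg (i + 1) (by omega)).1
        have h2 := (rsq_isHomogeneous.pow i).mul h1
        rwa [show 2 * i + (n - 2 * (i + 1)) = n - 2 by omega] at h2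
      have hQΔ : mvLaplacian (rsq d * Q) = 0 := by
        have hneg : rsq d * Q = -g 0 := by
          rw [eq_neg_iff_add_eq_zero, add_comm]
          exact hsum2
        rw [hneg, mvLap_neg, (hg 0 (by omega)).2, neg_zero]
      have hQ0 : Q = 0 := harmonic_rsq_mul hd hQh hQΔ
      have hg0 : g 0 = 0 := by
        rw [hQ0, mul_zero, add_zero] at hsum2
        exact hsum2
      have hrec : ∀ i ≤ (n - 2) / 2, g (i + 1) = 0 := by
        apply ih (n - 2) (by omega) (fun i => g (i + 1))
        · intro i hi
          refine ⟨?_, (hg (i + 1) (by omega)).2⟩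
          have h1 := (hg (i + 1) (by omega)).1
          rwa [show n - 2 * (i + 1) = n - 2 - 2 * i by omega] at h1
        · rw [hrange, ← hQ, hQ0]
      intro i hi
      rcases Nat.eq_zero_or_pos i with rfl | hip
      · exact hg0
      · have h5 := hrec (i - 1) (by omega)
        rwa [Nat.sub_add_cancel hip] at h5

lemma eval_smul_homog {n : ℕ} {G : MvPolynomial (Fin d) ℝ} (hG : G.IsHomogeneous n)
    (c : ℝ) (x : Fin d → ℝ) : eval (c • x) G = c ^ n * eval x G := by
  conv_lhs => rw [G.as_sum]
  conv_rhs => rw [G.as_sum]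
  rw [map_sum, map_sum, Finset.mul_sum]
  apply Finset.sum_congr rfl
  intro v hv
  rw [eval_monomial, eval_monomial]
  have hdeg : v.degree = n := degree_of_coeff_ne_zero hG (mem_support_iff.mp hv)
  rw [Finsupp.prod, Finsupp.prod]
  have hstep : ∀ i ∈ v.support, (c • x) i ^ v i = c ^ v i * x i ^ v i := by
    intro i _
    rw [Pi.smul_apply, smul_eq_mul, mul_pow]
  rw [Finset.prod_congr rfl hstep, Finset.prod_mul_distrib, Finset.prod_pow_eq_pow_sum]
  rw [show ∑ i ∈ v.support, v i = n from hdeg ▸ rfl]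
  ring

lemma vanish_on_sphere (hd : 1 ≤ d) {n : ℕ} {G : MvPolynomial (Fin d) ℝ}
    (hG : G.IsHomogeneous n)
    (h : ∀ x : Fin d → ℝ, ∑ j, x j ^ 2 = 1 → eval x G = 0) : G = 0 := by
  apply hG.eq_zero_of_forall_eval_eq_zero
  intro x
  have htnn : 0 ≤ ∑ j, x j ^ 2 := Finset.sum_nonneg fun j _ => sq_nonneg _
  set u1 : Fin d → ℝ := Pi.single (⟨0, by omega⟩ : Fin d) 1 with hu1
  have hu1s : ∑ j, u1 j ^ 2 = 1 := by
    rw [hu1]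
    rw [Finset.sum_eq_single (⟨0, by omega⟩ : Fin d)
      (fun k _ hk => by rw [Pi.single_eq_of_ne hk]; ring) (by simp)]
    rw [Pi.single_eq_same]
    norm_num
  by_cases h0 : (∑ j, x j ^ 2) = 0
  · have hx0 : x = 0 := by
      funext j
      have hj := (Finset.sum_eq_zero_iff_of_nonneg (fun j _ => sq_nonneg (x j))).mp h0 j
        (Finset.mem_univ j)
      have := pow_eq_zero_iff (n := 2) (by norm_num) |>.mp hj
      exact this
    subst hx0
    have h1 : eval ((0:ℝ) • u1) G = 0 ^ n * eval u1 G := eval_smul_homog hG 0 u1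
    rw [zero_smul] at h1
    rcases Nat.eq_zero_or_pos n with rfl | hnpos
    · rw [pow_zero, one_mul, h u1 hu1s] at h1
      exact h1
    · rw [zero_pow (by omega), zero_mul] at h1
      exact h1
  · set t : ℝ := Real.sqrt (∑ j, x j ^ 2) with ht
    have htpos : 0 < t := Real.sqrt_pos.mpr (lt_of_le_of_ne htnn (Ne.symm h0))
    set u : Fin d → ℝ := t⁻¹ • x with hu
    have hus : ∑ j, u j ^ 2 = 1 := by
      have ht2 : t ^ 2 = ∑ j, x j ^ 2 := Real.sq_sqrt htnn
      rw [hu]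
      simp only [Pi.smul_apply, smul_eq_mul, mul_pow]
      rw [← Finset.mul_sum, ← ht2]
      field_simp
    have hx : x = t • u := by
      rw [hu, smul_smul, mul_inv_cancel₀ (ne_of_gt htpos), one_smul]
    rw [hx, eval_smul_homog hG, h u hus, mul_zero]

end
end Aux

/-- Let `d ≥ 2` and let `p` be a real polynomial in `d` variables that is homogeneous of degree
`n`.  Then there exist harmonic polynomials `h_{n−2i}`, each homogeneous of degree `n − 2i` for
`i = 0, 1, …, ⌊n/2⌋`, such that `p(x) = Σ_{i=0}^{⌊n/2⌋} h_{n−2i}(x)` for every `x ∈ ℝ^d` with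
`‖x‖ = 1`; moreover, the polynomials `h_{n−2i}` with this property are unique. -/
theorem homogeneous_eq_sum_harmonic_on_sphere_unique (d n : ℕ) (hd : 2 ≤ d)
    (p : MvPolynomial (Fin d) ℝ) (hp : p.IsHomogeneous n) :
    ∃ h : ℕ → MvPolynomial (Fin d) ℝ,
      ((∀ i ≤ n / 2, (h i).IsHomogeneous (n - 2 * i) ∧ mvLaplacian (h i) = 0) ∧
        ∀ x : Fin d → ℝ, ∑ j, x j ^ 2 = 1 →
          eval x p = ∑ i ∈ Finset.range (n / 2 + 1), eval x (h i)) ∧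
      ∀ h' : ℕ → MvPolynomial (Fin d) ℝ,
        ((∀ i ≤ n / 2, (h' i).IsHomogeneous (n - 2 * i) ∧ mvLaplacian (h' i) = 0) ∧
          ∀ x : Fin d → ℝ, ∑ j, x j ^ 2 = 1 →
            eval x p = ∑ i ∈ Finset.range (n / 2 + 1), eval x (h' i)) →
        ∀ i ≤ n / 2, h' i = h i := by
  have hd1 : 1 ≤ d := by omega
  obtain ⟨h, hh, hps⟩ := exists_decomp hd1 n p hp
  have hsphere : ∀ x : Fin d → ℝ, ∑ j, x j ^ 2 = 1 →
      eval x p = ∑ i ∈ Finset.range (n / 2 + 1), eval x (h i) := by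
    intro x hx
    rw [hps, map_sum]
    apply Finset.sum_congr rfl
    intro i _
    rw [map_mul, map_pow, eval_rsq, hx, one_pow, one_mul]
  refine ⟨h, ⟨hh, hsphere⟩, ?_⟩
  rintro h' ⟨hh', hs'⟩ i hi
  have hGhom : (∑ i ∈ Finset.range (n / 2 + 1), rsq d ^ i * (h' i - h i)).IsHomogeneous n := by
    apply MvPolynomial.IsHomogeneous.sum
    intro i hi2
    rw [Finset.mem_range] at hi2
    have h1 : (h' i - h i).IsHomogeneous (n - 2 * i) :=
      (hh' i (by omega)).1.sub (hh i (by omega)).1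
    have h2 := (rsq_isHomogeneous.pow i).mul h1
    rwa [show 2 * i + (n - 2 * i) = n by omega] at h2
  have hG : (∑ i ∈ Finset.range (n / 2 + 1), rsq d ^ i * (h' i - h i)) = 0 := by
    apply vanish_on_sphere hd1 hGhom
    intro x hx
    rw [map_sum]
    have hterm : ∀ i ∈ Finset.range (n / 2 + 1), eval x (rsq d ^ i * (h' i - h i))
        = eval x (h' i) - eval x (h i) := by
      intro i _
      rw [map_mul, map_pow, eval_rsq, hx, one_pow, one_mul, map_sub]
    rw [Finset.sum_congr rfl hterm, Finset.sum_sub_distrib, ← hs' x hx, ← hsphere x hx,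
      sub_self]
  have hzero := decomp_unique hd1 n (fun i => h' i - h i) ?_ hG i hi
  · exact sub_eq_zero.mp hzero
  · intro i hi2
    exact ⟨(hh' i hi2).1.sub (hh i hi2).1,
      by rw [mvLap_sub, (hh' i hi2).2, (hh i hi2).2, sub_self]⟩
end

section
/- Let n, N, M be positive integers and σ₀ > 0. Let w ∈ ℝⁿ be a random vector with independent coordinates, each mean-zero σ₀²-sub-Gaussian. Let U₁ ∈ ℝ^{n×N} and U₂ ∈ ℝ^{n×M} be matrices with orthonormal columns such that the column span of U₁ is contained in the column span of U₂, and let D ∈ ℝ^{N×M} satisfy ‖D‖₂ ≤ 4. Put 𝐌 := (1/n) U₁ D U₂ᵀ. Then there exists a constant c > 0 depending only on σ₀ such that with probability at least 1 − exp(−c M): |wᵀ 𝐌 w| ≤ 4 M (σ₀² + 1) / n. -/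
open MeasureTheory Matrix Real ProbabilityTheory

/-- The spectral (ℓ²-operator) norm of a real matrix. -/
noncomputable def specNorm {m n : Type*} [Fintype m] [Fintype n] [DecidableEq n]
    (A : Matrix m n ℝ) : ℝ :=
  ‖LinearMap.toContinuousLinearMap (Matrix.toEuclideanLin A)‖

section Auxiliary

lemma gauss_shift (a : ℝ) :
    Integrable (fun x : ℝ => Real.exp (a * x - x ^ 2 / 2)) volume ∧
      ∫ x : ℝ, Real.exp (a * x - x ^ 2 / 2) = Real.sqrt (2 * π) * Real.exp (a ^ 2 / 2) := by
  have hkey : ∀ x : ℝ, Real.exp (a * x - x ^ 2 / 2)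
      = Real.exp (a ^ 2 / 2) * Real.exp (-(2⁻¹ : ℝ) * (x - a) ^ 2) := by
    intro x
    rw [← Real.exp_add]
    ring_nf
  have hint : Integrable (fun x : ℝ => Real.exp (-(2⁻¹ : ℝ) * (x - a) ^ 2)) volume :=
    (integrable_exp_neg_mul_sq (by norm_num : (0:ℝ) < 2⁻¹)).comp_sub_right a
  constructor
  · simp_rw [hkey]
    exact hint.const_mul _
  · simp_rw [hkey]
    rw [integral_const_mul]
    have : (∫ x : ℝ, Real.exp (-(2⁻¹ : ℝ) * (x - a) ^ 2)) =
        ∫ x : ℝ, Real.exp (-(2⁻¹ : ℝ) * x ^ 2) := by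
      exact integral_sub_right_eq_self (fun x => Real.exp (-(2⁻¹ : ℝ) * x ^ 2)) a
    rw [this, integral_gaussian]
    rw [mul_comm]
    congr 1
    ring

lemma rate_ineq (σ₀ : ℝ) (hσ₀ : 0 < σ₀) :
    Real.sqrt ((1 - min (1/2) (1/(4*σ₀^2)))⁻¹) ≤
      Real.exp ((min (1/2) (1/(4*σ₀^2))/(2*σ₀^2))*(σ₀^2+1) - min (1/2) (1/(4*σ₀^2))/(4*σ₀^2)) := by
  set θ := min (1/2) (1/(4*σ₀^2)) with hθdef
  have hσ2 : 0 < σ₀^2 := by positivity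
  have hθpos : 0 < θ := lt_min (by norm_num) (by positivity)
  have hθle : θ ≤ 1/2 := min_le_left _ _
  have hθle' : θ ≤ 1/(4*σ₀^2) := min_le_right _ _
  have h1θ : (0:ℝ) < 1 - θ := by linarith
  have hL : Real.sqrt ((1-θ)⁻¹) = Real.exp (-(Real.log (1-θ))/2) := by
    rw [show -(Real.log (1-θ)) = Real.log (1-θ)⁻¹ by rw [Real.log_inv]]
    rw [← Real.exp_log (x := Real.sqrt ((1-θ)⁻¹)) (by positivity), Real.log_sqrt (by positivity)]
  rw [hL]
  apply Real.exp_le_exp.2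
  -- -(log (1-θ))/2 ≤ θ/2 + θ²
  have hlog : -Real.log (1-θ) ≤ θ + 2*θ^2 := by
    have h1 : Real.log ((1-θ)⁻¹) ≤ (1-θ)⁻¹ - 1 :=
      Real.log_le_sub_one_of_pos (by positivity)
    have h2 : (1-θ)⁻¹ - 1 = θ/(1-θ) := by field_simp; ring
    have h3 : θ/(1-θ) ≤ θ*(1+2*θ) := by
      rw [div_le_iff₀ h1θ]
      nlinarith [mul_nonneg (sq_nonneg θ) (by linarith : (0:ℝ) ≤ 1 - 2*θ)]
    rw [Real.log_inv] at h1
    nlinarith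
  have hsq : θ^2 ≤ θ/(4*σ₀^2) := by
    have : θ*θ ≤ θ*(1/(4*σ₀^2)) := mul_le_mul_of_nonneg_left hθle' hθpos.le
    calc θ^2 = θ*θ := sq θ
    _ ≤ θ*(1/(4*σ₀^2)) := this
    _ = θ/(4*σ₀^2) := by ring
  have hexp : (θ/(2*σ₀^2))*(σ₀^2+1) = θ/2 + θ/(2*σ₀^2) := by field_simp
  have hid : θ/(2*σ₀^2) - θ/(4*σ₀^2) = θ/(4*σ₀^2) := by
    field_simp
    ring
  rw [hexp]
  linarith

lemma mgf_linear {Ω : Type} [MeasurableSpace Ω] {P : Measure Ω} [IsProbabilityMeasure P]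
    {n : ℕ} {w : Fin n → Ω → ℝ} (hmeas : ∀ i, Measurable (w i))
    (hindep : ProbabilityTheory.iIndepFun w P)
    {σ₀ : ℝ}
    (hsub : ∀ (i : Fin n) (l : ℝ), Integrable (fun ω => Real.exp (l * w i ω)) P ∧
        ∫ ω, Real.exp (l * w i ω) ∂P ≤ Real.exp (l ^ 2 * σ₀ ^ 2 / 2))
    (a : Fin n → ℝ) :
    Integrable (fun ω => Real.exp (∑ i, a i * w i ω)) P ∧
      ∫ ω, Real.exp (∑ i, a i * w i ω) ∂P ≤ Real.exp ((∑ i, (a i)^2) * σ₀^2 / 2) := by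
  set X : Fin n → Ω → ℝ := fun i ω => a i * w i ω with hX
  have hXmeas : ∀ i, Measurable (X i) := fun i => (hmeas i).const_mul (a i)
  have hXindep : iIndepFun X P := by
    exact hindep.comp (fun i x => a i * x) (fun i => measurable_const_mul (a i))
  have hXint : ∀ i ∈ Finset.univ, Integrable (fun ω => Real.exp (1 * X i ω)) P := by
    intro i _
    simp only [one_mul, hX]
    exact (hsub i (a i)).1
  have hsum : ∀ ω, (∑ i, a i * w i ω) = 1 * (∑ i, X i) ω := by
    intro ω; simp [hX]
  constructor
  · have := hXindep.integrable_exp_mul_sum hXmeas (t := 1) hXint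
    simpa using this
  · have hmgf := hXindep.mgf_sum hXmeas (t := 1) Finset.univ
    have hmgfdef : mgf (∑ i, X i) P 1 = ∫ ω, Real.exp (∑ i, a i * w i ω) ∂P := by
      unfold mgf
      congr 1 with ω
      rw [hsum ω]
    rw [← hmgfdef, hmgf]
    calc ∏ i, mgf (X i) P 1 ≤ ∏ i, Real.exp ((a i)^2 * σ₀^2/2) := by
          apply Finset.prod_le_prod (fun i _ => mgf_nonneg)
          intro i _
          have := (hsub i (a i)).2
          unfold mgf
          simpa using this
    _ = Real.exp ((∑ i, (a i)^2) * σ₀^2 / 2) := by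
          rw [← Real.exp_sum]
          congr 1
          rw [Finset.sum_mul, Finset.sum_div]

lemma dot_cs {k : ℕ} (u v : Fin k → ℝ) : (u ⬝ᵥ v)^2 ≤ (u ⬝ᵥ u) * (v ⬝ᵥ v) := by
  simpa [dotProduct, pow_two] using
    Finset.sum_mul_sq_le_sq_mul_sq Finset.univ u v

lemma dot_shift {k l : ℕ} (A : Matrix (Fin k) (Fin l) ℝ) (u : Fin l → ℝ) (v : Fin k → ℝ) :
    (A *ᵥ u) ⬝ᵥ v = u ⬝ᵥ (Aᵀ *ᵥ v) := by
  rw [dotProduct_mulVec, Matrix.vecMul_transpose]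

lemma quad_bound {n N M : ℕ} (U₁ : Matrix (Fin n) (Fin N) ℝ) (U₂ : Matrix (Fin n) (Fin M) ℝ)
    (D : Matrix (Fin N) (Fin M) ℝ) (h1 : U₁ᵀ * U₁ = 1) (h2 : U₂ᵀ * U₂ = 1)
    (hrange : LinearMap.range U₁.mulVecLin ≤ LinearMap.range U₂.mulVecLin)
    (hD : specNorm D ≤ 4) (x : Fin n → ℝ) :
    |x ⬝ᵥ ((U₁ * D * U₂ᵀ) *ᵥ x)| ≤ 4 * ((U₂ᵀ *ᵥ x) ⬝ᵥ (U₂ᵀ *ᵥ x)) := by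
  classical
  have hU : U₂ * (U₂ᵀ * U₁) = U₁ := by
    ext i j
    obtain ⟨u, hu⟩ : ∃ u, U₂ *ᵥ u = U₁ *ᵥ Pi.single j 1 :=
      hrange ⟨Pi.single j 1, rfl⟩
    have key : (U₂ * (U₂ᵀ * U₁)) *ᵥ Pi.single j 1 = U₁ *ᵥ Pi.single j 1 := by
      have e1 : (U₂ * (U₂ᵀ * U₁)) *ᵥ Pi.single j 1
          = U₂ *ᵥ (U₂ᵀ *ᵥ (U₁ *ᵥ Pi.single j 1)) := by
        rw [Matrix.mulVec_mulVec, Matrix.mulVec_mulVec, Matrix.mul_assoc]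
      rw [e1, ← hu, Matrix.mulVec_mulVec, Matrix.mulVec_mulVec, Matrix.mul_assoc,
        ← Matrix.mul_assoc U₂ U₂ᵀ U₂]
      rw [show U₂ * U₂ᵀ * U₂ = U₂ * (U₂ᵀ * U₂) from Matrix.mul_assoc _ _ _, h2,
        Matrix.mul_one]
    have := congrFun key i
    simpa [Matrix.mulVec_single] using this
  set Q : Matrix (Fin M) (Fin N) ℝ := U₂ᵀ * U₁ with hQdef
  have hQ : Qᵀ * Q = 1 := by
    have : Qᵀ * Q = U₁ᵀ * (U₂ * Q) := by
      rw [hQdef, Matrix.transpose_mul, Matrix.transpose_transpose, Matrix.mul_assoc]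
    rw [this, hU, h1]
  set vv := U₂ᵀ *ᵥ x with hvv
  set xx := U₁ᵀ *ᵥ x with hxx
  have hxxvv : xx = Qᵀ *ᵥ vv := by
    rw [hxx, ← hU, Matrix.transpose_mul, ← Matrix.mulVec_mulVec]
  set s := xx ⬝ᵥ xx with hs
  set t := vv ⬝ᵥ vv with ht
  have hsnn : 0 ≤ s := Finset.sum_nonneg fun i _ => mul_self_nonneg _
  have htnn : 0 ≤ t := Finset.sum_nonneg fun i _ => mul_self_nonneg _
  set P : Matrix (Fin M) (Fin M) ℝ := Q * Qᵀ with hPdef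
  set pv := P *ᵥ vv with hpv
  have hsp : s = vv ⬝ᵥ pv := by
    rw [hs, hxxvv, dot_shift, Matrix.transpose_transpose, Matrix.mulVec_mulVec, ← hPdef, ← hpv]
  have hproj : P * P = P := by
    rw [hPdef, Matrix.mul_assoc, ← Matrix.mul_assoc Qᵀ Q Qᵀ, hQ, Matrix.one_mul]
  have hPsymm : Pᵀ = P := by
    rw [hPdef, Matrix.transpose_mul, Matrix.transpose_transpose]
  have hpp : pv ⬝ᵥ pv = s := by
    rw [hpv, dot_shift, hPsymm, Matrix.mulVec_mulVec, hproj, ← hpv, ← hsp]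
  have hst : s ≤ t := by
    have hcs := dot_cs vv pv
    rw [hpp, ← hsp, ← ht] at hcs
    rcases hsnn.eq_or_lt with h | h
    · rw [← h]; exact htnn
    · nlinarith
  -- spectral norm step
  set yy := D *ᵥ vv with hyy
  have hyt : yy ⬝ᵥ yy ≤ 16 * t := by
    set v' : EuclideanSpace ℝ (Fin M) := (WithLp.equiv 2 _).symm vv with hv'
    set T := LinearMap.toContinuousLinearMap (Matrix.toEuclideanLin D) with hT
    have hTv : T v' = (WithLp.equiv 2 _).symm yy := rfl
    have hnv : ‖v'‖^2 = t := by
      rw [EuclideanSpace.norm_eq, Real.sq_sqrt (Finset.sum_nonneg fun i _ => sq_nonneg _)]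
      simp [ht, dotProduct, hv', pow_two]
    have hny : ‖T v'‖^2 = yy ⬝ᵥ yy := by
      rw [hTv, EuclideanSpace.norm_eq, Real.sq_sqrt (Finset.sum_nonneg fun i _ => sq_nonneg _)]
      simp [dotProduct, pow_two]
    have hop : ‖T v'‖ ≤ specNorm D * ‖v'‖ := T.le_opNorm v'
    have hnorm_nn : (0:ℝ) ≤ ‖v'‖ := norm_nonneg _
    have hspec_nn : (0:ℝ) ≤ specNorm D := norm_nonneg _
    calc yy ⬝ᵥ yy = ‖T v'‖^2 := hny.symm
    _ ≤ (specNorm D * ‖v'‖)^2 := by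
        apply pow_le_pow_left₀ (norm_nonneg _) hop
    _ ≤ (4 * ‖v'‖)^2 := by
        apply pow_le_pow_left₀ (by positivity)
        exact mul_le_mul_of_nonneg_right hD hnorm_nn
    _ = 16 * ‖v'‖^2 := by ring
    _ = 16 * t := by rw [hnv]
  -- combine
  have hquad : x ⬝ᵥ ((U₁ * D * U₂ᵀ) *ᵥ x) = xx ⬝ᵥ yy := by
    have e1 : (U₁ * D * U₂ᵀ) *ᵥ x = U₁ *ᵥ yy := by
      rw [hyy, hvv, Matrix.mulVec_mulVec, Matrix.mulVec_mulVec, Matrix.mul_assoc]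
    rw [e1, dotProduct_mulVec, ← Matrix.mulVec_transpose, ← hxx]
  have hcs2 := dot_cs xx yy
  rw [← hs] at hcs2
  have hsq : (x ⬝ᵥ ((U₁ * D * U₂ᵀ) *ᵥ x))^2 ≤ (4*t)^2 := by
    rw [hquad]
    calc (xx ⬝ᵥ yy)^2 ≤ s * (yy ⬝ᵥ yy) := hcs2
    _ ≤ t * (16 * t) := by
        apply mul_le_mul hst hyt (Finset.sum_nonneg fun i _ => mul_self_nonneg _) htnn
    _ = (4*t)^2 := by ring
  exact abs_le_of_sq_le_sq hsq (by positivity)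

end Auxiliary

/-- Let `w ∈ ℝⁿ` be a random vector with independent coordinates, each mean-zero
`σ₀²`-sub-Gaussian.  Let `U₁ ∈ ℝ^{n×N}`, `U₂ ∈ ℝ^{n×M}` have orthonormal columns with the column
span of `U₁` contained in that of `U₂`, and let `D ∈ ℝ^{N×M}` satisfy `‖D‖₂ ≤ 4`.  Put
`𝐌 := (1/n) U₁ D U₂ᵀ`.  Then there is a constant `c > 0` depending only on `σ₀` such that with
probability at least `1 − exp(−cM)` : `|wᵀ 𝐌 w| ≤ 4 M (σ₀² + 1)/n`. -/
theorem subgaussian_quadratic_form_subspace_bound (σ₀ : ℝ) (hσ₀ : 0 < σ₀) :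
    ∃ c > (0 : ℝ),
      ∀ (n N M : ℕ), 0 < n → 0 < N → 0 < M →
      ∀ (Ω : Type) (_ : MeasurableSpace Ω) (P : Measure Ω), IsProbabilityMeasure P →
      ∀ w : Fin n → Ω → ℝ, (∀ i, Measurable (w i)) →
        ProbabilityTheory.iIndepFun w P →
        (∀ (i : Fin n) (l : ℝ),
          Integrable (fun ω => Real.exp (l * w i ω)) P ∧
            ∫ ω, Real.exp (l * w i ω) ∂P ≤ Real.exp (l ^ 2 * σ₀ ^ 2 / 2)) →
      ∀ (U₁ : Matrix (Fin n) (Fin N) ℝ) (U₂ : Matrix (Fin n) (Fin M) ℝ)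
        (D : Matrix (Fin N) (Fin M) ℝ),
        U₁ᵀ * U₁ = 1 → U₂ᵀ * U₂ = 1 →
        LinearMap.range U₁.mulVecLin ≤ LinearMap.range U₂.mulVecLin →
        specNorm D ≤ 4 →
        P {ω | |∑ i, ∑ j, w i ω * ((n : ℝ)⁻¹ • (U₁ * D * U₂ᵀ)) i j * w j ω| ≤
              4 * M * (σ₀ ^ 2 + 1) / n} ≥
          ENNReal.ofReal (1 - Real.exp (-(c * M))) := by
  classical
  set θ : ℝ := min (1/2) (1/(4*σ₀^2)) with hθdef
  have hσ2 : (0:ℝ) < σ₀^2 := by positivity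
  have hθpos : 0 < θ := lt_min (by norm_num) (by positivity)
  have hθle : θ ≤ 1/2 := min_le_left _ _
  have h1θ : (0:ℝ) < 1 - θ := by linarith
  set L : ℝ := θ/(2*σ₀^2) with hLdef
  have hLpos : 0 < L := by positivity
  set c : ℝ := θ/(4*σ₀^2) with hcdef
  have hcpos : 0 < c := by positivity
  refine ⟨c, hcpos, ?_⟩
  intro n N M hn hN hM Ω mΩ P hP w hwmeas hwindep hwsub U₁ U₂ D h1 h2 hrange hD
  set t' : ℝ := σ₀^2 + 1 with ht'def
  have ht'pos : 0 < t' := by positivity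
  -- the coordinates of U₂ᵀ w and the squared norm
  set v : Fin M → Ω → ℝ := fun j ω => ∑ i, U₂ i j * w i ω with hvdef
  have hvmeas : ∀ j, Measurable (v j) :=
    fun j => Finset.measurable_sum _ (fun i _ => (hwmeas i).const_mul _)
  set V : Ω → ℝ := fun ω => ∑ j, (v j ω)^2 with hVdef
  have hVmeas : Measurable V := Finset.measurable_sum _ (fun j _ => ((hvmeas j).pow_const 2))
  have hVnn : ∀ ω, 0 ≤ V ω := fun ω => Finset.sum_nonneg fun j _ => sq_nonneg _
  set s : ℝ := Real.sqrt (2*L) with hsdef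
  have hs2 : s^2 = 2*L := Real.sq_sqrt (by positivity)
  -- step A : per-ω Gaussian identity
  set F : Ω → (Fin M → ℝ) → ℝ :=
    fun ω g => ∏ j, Real.exp (s * v j ω * g j - (g j)^2/2) with hFdef
  have stepA : ∀ ω, ∫⁻ g : Fin M → ℝ, ENNReal.ofReal (F ω g)
      = ENNReal.ofReal ((Real.sqrt (2*π))^M * Real.exp (L * V ω)) := by
    intro ω
    have hint : Integrable (F ω) :=
      Integrable.fintype_prod (f := fun j x => Real.exp (s * v j ω * x - x^2/2))
        (fun j => (gauss_shift (s * v j ω)).1)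
    have hnn : 0 ≤ᵐ[volume] F ω :=
      Filter.Eventually.of_forall fun g => Finset.prod_nonneg fun j _ => (Real.exp_pos _).le
    rw [← ofReal_integral_eq_lintegral_ofReal hint hnn]
    congr 1
    simp only [hFdef]
    rw [integral_fintype_prod_volume_eq_prod (f := fun j x => Real.exp (s * v j ω * x - x^2/2))]
    have hj : ∀ j, (∫ x : ℝ, Real.exp (s * v j ω * x - x^2/2))
        = Real.sqrt (2*π) * Real.exp (L * (v j ω)^2) := by
      intro j
      rw [(gauss_shift (s * v j ω)).2]
      congr 2
      rw [mul_pow, hs2]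
      ring
    simp_rw [hj]
    rw [Finset.prod_mul_distrib, Finset.prod_const, ← Real.exp_sum, Finset.card_univ,
      Fintype.card_fin, ← Finset.mul_sum]
  -- step C : inner bound
  have stepC : ∀ g : Fin M → ℝ, ∫⁻ ω, ENNReal.ofReal (F ω g) ∂P
      ≤ ENNReal.ofReal (∏ j, Real.exp (-((1-θ)/2) * (g j)^2)) := by
    intro g
    set a : Fin n → ℝ := fun i => s * ∑ j, U₂ i j * g j with hadef
    set C : ℝ := Real.exp (-∑ j, (g j)^2/2) with hCdef
    have hrw : ∀ ω, F ω g = Real.exp (∑ i, a i * w i ω) * C := by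
      intro ω
      simp only [hFdef]
      rw [← Real.exp_sum, Finset.sum_sub_distrib, hCdef, ← Real.exp_add]
      congr 1
      rw [sub_eq_add_neg, ← Finset.sum_neg_distrib]
      congr 1
      have hj : ∀ j, s * v j ω * g j = ∑ i, (s * U₂ i j * g j) * w i ω := by
        intro j
        rw [hvdef]
        simp only [Finset.mul_sum, Finset.sum_mul]
        exact Finset.sum_congr rfl fun i _ => by ring
      simp_rw [hj]
      rw [Finset.sum_comm]
      refine Finset.sum_congr rfl fun i _ => ?_
      simp only [hadef, Finset.mul_sum, Finset.sum_mul]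
      exact Finset.sum_congr rfl fun j _ => by ring
    simp_rw [hrw]
    have hmeasE : Measurable fun ω => ENNReal.ofReal (Real.exp (∑ i, a i * w i ω)) := by
      apply Measurable.ennreal_ofReal
      exact (Finset.measurable_sum _ (fun i _ => (hwmeas i).const_mul _)).exp
    calc ∫⁻ ω, ENNReal.ofReal (Real.exp (∑ i, a i * w i ω) * C) ∂P
        = (∫⁻ ω, ENNReal.ofReal (Real.exp (∑ i, a i * w i ω)) ∂P) * ENNReal.ofReal C := by
          rw [show (fun ω => ENNReal.ofReal (Real.exp (∑ i, a i * w i ω) * C))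
              = fun ω => ENNReal.ofReal (Real.exp (∑ i, a i * w i ω)) * ENNReal.ofReal C from
            funext fun ω => ENNReal.ofReal_mul (Real.exp_pos _).le]
          exact lintegral_mul_const _ hmeasE
      _ ≤ ENNReal.ofReal (Real.exp ((∑ i, (a i)^2) * σ₀^2/2)) * ENNReal.ofReal C := by
          apply mul_le_mul_left
          rw [← ofReal_integral_eq_lintegral_ofReal (mgf_linear hwmeas hwindep hwsub a).1
            (Filter.Eventually.of_forall fun ω => (Real.exp_pos _).le)]
          exact ENNReal.ofReal_le_ofReal (mgf_linear hwmeas hwindep hwsub a).2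
      _ = ENNReal.ofReal (∏ j, Real.exp (-((1-θ)/2) * (g j)^2)) := by
          rw [← ENNReal.ofReal_mul (Real.exp_pos _).le, hCdef, ← Real.exp_add, ← Real.exp_sum]
          congr 1
          have hsum : ∑ i, (a i)^2 = 2*L*(∑ j, (g j)^2) := by
            have h1' : ∑ i, (a i)^2 = s^2 * ((U₂ *ᵥ g) ⬝ᵥ (U₂ *ᵥ g)) := by
              rw [dotProduct, Finset.mul_sum]
              refine Finset.sum_congr rfl fun i _ => ?_
              simp only [hadef, Matrix.mulVec, dotProduct]
              ring
            rw [h1', dot_shift, Matrix.mulVec_mulVec, h2, Matrix.one_mulVec, hs2]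
            congr 1
            rw [dotProduct]
            exact Finset.sum_congr rfl fun j _ => (sq (g j)).symm
          rw [hsum, hLdef, show (∑ j, -((1-θ)/2) * (g j)^2) = -((1-θ)/2) * ∑ j, (g j)^2 from
            (Finset.mul_sum _ _ _).symm, ← Finset.sum_div]
          field_simp
          ring
  -- step D : Gaussian integral
  have hb : (0:ℝ) < (1-θ)/2 := by linarith
  have stepD : ∫⁻ g : Fin M → ℝ, ENNReal.ofReal (∏ j, Real.exp (-((1-θ)/2) * (g j)^2))
      = ENNReal.ofReal ((Real.sqrt (π/((1-θ)/2)))^M) := by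
    have hint : Integrable (fun g : Fin M → ℝ => ∏ j, Real.exp (-((1-θ)/2) * (g j)^2)) :=
      Integrable.fintype_prod (f := fun j x => Real.exp (-((1-θ)/2) * x^2))
        (fun j => integrable_exp_neg_mul_sq hb)
    have hnn : 0 ≤ᵐ[volume] fun g : Fin M → ℝ => ∏ j, Real.exp (-((1-θ)/2) * (g j)^2) :=
      Filter.Eventually.of_forall fun g => Finset.prod_nonneg fun j _ => (Real.exp_pos _).le
    rw [← ofReal_integral_eq_lintegral_ofReal hint hnn]
    congr 1
    rw [integral_fintype_prod_volume_eq_prod (f := fun j x => Real.exp (-((1-θ)/2) * x^2))]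
    simp_rw [integral_gaussian]
    rw [Finset.prod_const, Finset.card_univ, Fintype.card_fin]
  -- measurability for swap
  have hFmeas : Measurable (Function.uncurry fun ω g => ENNReal.ofReal (F ω g)) := by
    apply Measurable.ennreal_ofReal
    apply Finset.measurable_prod
    intro j _
    apply Measurable.exp
    apply Measurable.sub
    · exact (((hvmeas j).comp measurable_fst).const_mul s).mul
        ((measurable_pi_apply j).comp measurable_snd)
    · exact (((measurable_pi_apply j).comp measurable_snd).pow_const 2).div_const 2
  -- assemble : bound on mgf of V
  have hA : ∫⁻ ω, ENNReal.ofReal (Real.exp (L * V ω)) ∂P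
      ≤ ENNReal.ofReal ((Real.sqrt ((1-θ)⁻¹))^M) := by
    set K : ℝ := (Real.sqrt (2*π))^M with hKdef
    have hKpos : 0 < K := by positivity
    have hchain : (∫⁻ ω, ENNReal.ofReal (Real.exp (L * V ω)) ∂P) * ENNReal.ofReal K
        ≤ ENNReal.ofReal ((Real.sqrt (π/((1-θ)/2)))^M) := by
      have hmeasLV : Measurable fun ω => ENNReal.ofReal (Real.exp (L * V ω)) :=
        (hVmeas.const_mul L).exp.ennreal_ofReal
      calc (∫⁻ ω, ENNReal.ofReal (Real.exp (L * V ω)) ∂P) * ENNReal.ofReal K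
          = ∫⁻ ω, ENNReal.ofReal (Real.exp (L * V ω)) * ENNReal.ofReal K ∂P :=
            (lintegral_mul_const _ hmeasLV).symm
        _ = ∫⁻ ω, ∫⁻ g : Fin M → ℝ, ENNReal.ofReal (F ω g) ∂volume ∂P := by
            refine lintegral_congr fun ω => ?_
            rw [stepA ω, ENNReal.ofReal_mul (by positivity : (0:ℝ) ≤ (Real.sqrt (2*π))^M),
              mul_comm]
        _ = ∫⁻ g : Fin M → ℝ, ∫⁻ ω, ENNReal.ofReal (F ω g) ∂P ∂volume :=
            lintegral_lintegral_swap hFmeas.aemeasurable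
        _ ≤ ∫⁻ g : Fin M → ℝ, ENNReal.ofReal (∏ j, Real.exp (-((1-θ)/2) * (g j)^2)) ∂volume :=
            lintegral_mono fun g => stepC g
        _ = ENNReal.ofReal ((Real.sqrt (π/((1-θ)/2)))^M) := stepD
    have hdivK : ENNReal.ofReal ((Real.sqrt (π/((1-θ)/2)))^M) / ENNReal.ofReal K
        = ENNReal.ofReal ((Real.sqrt ((1-θ)⁻¹))^M) := by
      rw [← ENNReal.ofReal_div_of_pos hKpos]
      congr 1
      rw [hKdef, ← div_pow]
      congr 1
      rw [← Real.sqrt_div (by positivity : (0:ℝ) ≤ π/((1-θ)/2))]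
      congr 1
      have hπ : (0:ℝ) < π := Real.pi_pos
      field_simp
    rw [← hdivK]
    rw [ENNReal.le_div_iff_mul_le (Or.inl ?_) (Or.inl ?_)]
    · exact hchain
    · simp [ENNReal.ofReal_eq_zero, not_le, hKpos]
    · exact ENNReal.ofReal_ne_top
  -- Markov
  have hMarkov : P {ω | (M:ℝ) * t' < V ω} ≤ ENNReal.ofReal (Real.exp (-(c*M))) := by
    have hrate := rate_ineq σ₀ hσ₀
    rw [← hθdef, ← hLdef, ← hcdef, ← ht'def] at hrate
    set ε := ENNReal.ofReal (Real.exp (L * ((M:ℝ) * t'))) with hεdef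
    have hεpos : ε ≠ 0 := by
      simp [hεdef, ENNReal.ofReal_eq_zero, not_le, Real.exp_pos]
    have hεtop : ε ≠ ⊤ := ENNReal.ofReal_ne_top
    have hmeasLV : AEMeasurable (fun ω => ENNReal.ofReal (Real.exp (L * V ω))) P :=
      ((hVmeas.const_mul L).exp.ennreal_ofReal).aemeasurable
    have hsubset : {ω | (M:ℝ) * t' < V ω} ⊆
        {ω | ε ≤ ENNReal.ofReal (Real.exp (L * V ω))} := by
      intro ω hω
      exact ENNReal.ofReal_le_ofReal (Real.exp_le_exp.2
        (mul_le_mul_of_nonneg_left (le_of_lt hω) hLpos.le))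
    have hmarkov := mul_meas_ge_le_lintegral₀ hmeasLV ε
    have hP1 : P {ω | (M:ℝ) * t' < V ω} ≤
        (∫⁻ ω, ENNReal.ofReal (Real.exp (L * V ω)) ∂P) / ε := by
      rw [ENNReal.le_div_iff_mul_le (Or.inl hεpos) (Or.inl hεtop)]
      calc P {ω | (M:ℝ) * t' < V ω} * ε
          ≤ P {ω | ε ≤ ENNReal.ofReal (Real.exp (L * V ω))} * ε :=
            mul_le_mul_left (measure_mono hsubset) ε
        _ = ε * P {ω | ε ≤ ENNReal.ofReal (Real.exp (L * V ω))} := mul_comm _ _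
        _ ≤ _ := hmarkov
    refine hP1.trans ?_
    have : (∫⁻ ω, ENNReal.ofReal (Real.exp (L * V ω)) ∂P) / ε
        ≤ ENNReal.ofReal ((Real.sqrt ((1-θ)⁻¹))^M) / ε :=
      ENNReal.div_le_div_right hA ε
    refine this.trans ?_
    rw [hεdef, ← ENNReal.ofReal_div_of_pos (Real.exp_pos _)]
    apply ENNReal.ofReal_le_ofReal
    rw [div_le_iff₀ (Real.exp_pos _)]
    have hr_nn : (0:ℝ) ≤ Real.sqrt ((1-θ)⁻¹) := Real.sqrt_nonneg _
    calc (Real.sqrt ((1-θ)⁻¹))^M ≤ (Real.exp (L*t' - c))^M :=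
          pow_le_pow_left₀ hr_nn hrate M
      _ = Real.exp ((L*t' - c) * M) := by
          rw [← Real.exp_nat_mul]
          congr 1
          ring
      _ = Real.exp (-(c*M)) * Real.exp (L * ((M:ℝ)*t')) := by
          rw [← Real.exp_add]
          congr 1
          ring
  -- conclusion
  set Bad := {ω | (M:ℝ) * t' < V ω} with hBaddef
  have hBadMeas : MeasurableSet Bad := measurableSet_lt measurable_const hVmeas
  have hcompl : Badᶜ = {ω | V ω ≤ (M:ℝ) * t'} := by
    ext ω
    simp [hBaddef, not_lt]
  have hsub : {ω | V ω ≤ (M:ℝ) * t'} ⊆ {ω |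
      |∑ i, ∑ j, w i ω * ((n : ℝ)⁻¹ • (U₁ * D * U₂ᵀ)) i j * w j ω| ≤
        4 * M * (σ₀ ^ 2 + 1) / n} := by
    intro ω hω
    simp only [Set.mem_setOf_eq] at hω ⊢
    have hquadeq : ∑ i, ∑ j, w i ω * ((n : ℝ)⁻¹ • (U₁ * D * U₂ᵀ)) i j * w j ω
        = (n:ℝ)⁻¹ * ((fun i => w i ω) ⬝ᵥ ((U₁ * D * U₂ᵀ) *ᵥ (fun i => w i ω))) := by
      simp only [dotProduct, Matrix.mulVec, Matrix.smul_apply, smul_eq_mul,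
        Finset.mul_sum]
      refine Finset.sum_congr rfl fun i _ => Finset.sum_congr rfl fun j _ => by ring
    have hqb := quad_bound U₁ U₂ D h1 h2 hrange hD (fun i => w i ω)
    have hVeq : ((U₂ᵀ *ᵥ fun i => w i ω) ⬝ᵥ (U₂ᵀ *ᵥ fun i => w i ω)) = V ω := by
      simp only [dotProduct, Matrix.mulVec, Matrix.transpose_apply, hVdef, hvdef]
      exact Finset.sum_congr rfl fun j _ => (sq _).symm
    have habs : |(fun i => w i ω) ⬝ᵥ ((U₁ * D * U₂ᵀ) *ᵥ (fun i => w i ω))|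
        ≤ 4 * ((M:ℝ) * t') := by
      refine hqb.trans ?_
      rw [hVeq]
      nlinarith [hVnn ω]
    rw [hquadeq, abs_mul, abs_of_nonneg (by positivity : (0:ℝ) ≤ (n:ℝ)⁻¹)]
    have hnne : (0:ℝ) < (n:ℝ) := by exact_mod_cast hn
    calc (n:ℝ)⁻¹ * |(fun i => w i ω) ⬝ᵥ ((U₁ * D * U₂ᵀ) *ᵥ (fun i => w i ω))|
        ≤ (n:ℝ)⁻¹ * (4 * ((M:ℝ) * t')) :=
          mul_le_mul_of_nonneg_left habs (by positivity)
      _ = 4 * M * (σ₀ ^ 2 + 1) / n := by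
          rw [ht'def]
          field_simp
  have : ENNReal.ofReal (1 - Real.exp (-(c*M))) ≤
      P {ω | |∑ i, ∑ j, w i ω * ((n : ℝ)⁻¹ • (U₁ * D * U₂ᵀ)) i j * w j ω| ≤
        4 * M * (σ₀ ^ 2 + 1) / n} := by
    calc ENNReal.ofReal (1 - Real.exp (-(c*M)))
        = 1 - ENNReal.ofReal (Real.exp (-(c*M))) := by
          rw [ENNReal.ofReal_sub _ (Real.exp_pos _).le, ENNReal.ofReal_one]
      _ ≤ 1 - P Bad := tsub_le_tsub_left hMarkov 1
      _ = P Badᶜ := (prob_compl_eq_one_sub hBadMeas).symm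
      _ = P {ω | V ω ≤ (M:ℝ) * t'} := by rw [hcompl]
      _ ≤ _ := measure_mono hsub
  exact this
end

section
/- Let H be a separable real Hilbert space and let X₁, …, X_m be i.i.d. Bochner-integrable H-valued random variables such that ‖X_r‖_H ≤ c almost surely for some constant c > 0. Then for every r > 0: P( ‖(1/m) Σ_{r=1}^m X_r − E[X₁]‖_H > r ) ≤ 2 exp( − m r² / (8 c²) ). -/
open MeasureTheory

open Real Nat

lemma hsf_summable {u : ℝ} (hu : 0 ≤ u) : Summable (fun k : ℕ => u ^ k / ((2 * k)! : ℝ)) := by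
  have h := Real.hasSum_cosh (Real.sqrt u)
  have he : ∀ k : ℕ, (Real.sqrt u) ^ (2 * k) = u ^ k := fun k => by
    rw [pow_mul, Real.sq_sqrt hu]
  simp only [he] at h
  exact h.summable

lemma cosh_sqrt_eq {u : ℝ} (hu : 0 ≤ u) :
    Real.cosh (Real.sqrt u) = ∑' k : ℕ, u ^ k / ((2 * k)! : ℝ) := by
  rw [Real.cosh_eq_tsum]
  congr 1 with k
  rw [pow_mul, Real.sq_sqrt hu]

lemma cosh_sqrt_chord {q a p : ℝ} (hq : 0 ≤ q) (hqa : q ≤ a) (hap : a ≤ p) :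
    (p - q) * Real.cosh (Real.sqrt a) ≤
      (p - a) * Real.cosh (Real.sqrt q) + (a - q) * Real.cosh (Real.sqrt p) := by
  rcases eq_or_lt_of_le (hqa.trans hap) with h | h
  · have h1 : a = q := le_antisymm (h ▸ hap) hqa
    have h2 : p = q := h.symm
    subst h1; rw [h2]; ring_nf; exact le_refl _
  · -- q < p
    have hpq : 0 < p - q := sub_pos.2 h
    set θ : ℝ := (p - a) / (p - q) with hθ
    have hθ0 : 0 ≤ θ := div_nonneg (sub_nonneg.2 hap) hpq.le
    have hθ1 : 0 ≤ 1 - θ := by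
      rw [hθ]; rw [sub_nonneg]; exact div_le_one_of_le₀ (by linarith) hpq.le
    have hsum : θ + (1 - θ) = 1 := by ring
    have ha' : a = θ * q + (1 - θ) * p := by
      have h1 : (p - q) * θ = p - a := by rw [hθ]; field_simp
      linear_combination h1
    have hterm : ∀ k : ℕ, a ^ k ≤ θ * q ^ k + (1 - θ) * p ^ k := by
      intro k
      have := (convexOn_pow (𝕜 := ℝ) k).2 (Set.mem_Ici.2 hq)
        (Set.mem_Ici.2 (hq.trans (hqa.trans hap))) hθ0 hθ1 hsum
      simpa [smul_eq_mul, ← ha'] using this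
    have ha0 : 0 ≤ a := hq.trans hqa
    have hp0 : 0 ≤ p := ha0.trans hap
    have key : Real.cosh (Real.sqrt a) ≤
        θ * Real.cosh (Real.sqrt q) + (1 - θ) * Real.cosh (Real.sqrt p) := by
      rw [cosh_sqrt_eq ha0, cosh_sqrt_eq hq, cosh_sqrt_eq hp0, ← tsum_mul_left,
        ← tsum_mul_left, ← Summable.tsum_add ((hsf_summable hq).mul_left θ)
          ((hsf_summable hp0).mul_left (1 - θ))]
      refine (hsf_summable ha0).tsum_le_tsum (fun k => ?_)
        (((hsf_summable hq).mul_left θ).add ((hsf_summable hp0).mul_left (1 - θ)))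
      have hfac : (0:ℝ) < (2 * k)! := by positivity
      have h3 : θ * (q ^ k / ((2 * k)! : ℝ)) + (1 - θ) * (p ^ k / ((2 * k)! : ℝ))
          = (θ * q ^ k + (1 - θ) * p ^ k) / ((2 * k)! : ℝ) := by ring
      rw [h3]
      gcongr
      exact hterm k
    calc (p - q) * Real.cosh (Real.sqrt a)
        ≤ (p - q) * (θ * Real.cosh (Real.sqrt q) + (1 - θ) * Real.cosh (Real.sqrt p)) :=
          mul_le_mul_of_nonneg_left key hpq.le
      _ = (p - q) * θ * Real.cosh (Real.sqrt q)
            + (p - q) * (1 - θ) * Real.cosh (Real.sqrt p) := by ring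
      _ = (p - a) * Real.cosh (Real.sqrt q) + (a - q) * Real.cosh (Real.sqrt p) := by
          have h1 : (p - q) * θ = p - a := by rw [hθ]; field_simp
          have h2 : (p - q) * (1 - θ) = a - q := by rw [mul_sub, mul_one, h1]; ring
          rw [h1, h2]

open RealInnerProductSpace in
lemma cosh_norm_add_le {H : Type*} [NormedAddCommGroup H] [InnerProductSpace ℝ H]
    (x v : H) {b : ℝ} (hb : 0 < b) (hv : ‖v‖ ≤ b) :
    Real.cosh ‖x + v‖ ≤ Real.cosh ‖x‖ * Real.cosh b +
      ⟪x, v⟫ * (Real.sinh ‖x‖ * Real.sinh b / (‖x‖ * b)) := by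
  by_cases hx : x = 0
  · subst hx
    simp only [inner_zero_left, zero_mul, add_zero, zero_add, norm_zero, Real.cosh_zero, one_mul]
    rw [Real.cosh_le_cosh, abs_of_nonneg (norm_nonneg _), abs_of_nonneg hb.le]
    exact hv
  · have hn : 0 < ‖x‖ := norm_pos_iff.2 hx
    set n : ℝ := ‖x‖
    have hip : |⟪x, v⟫| ≤ n * b :=
      (abs_real_inner_le_norm x v).trans
        (mul_le_mul_of_nonneg_left hv (norm_nonneg x))
    have hipl := neg_abs_le ⟪x, v⟫
    have hipu := le_abs_self ⟪x, v⟫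
    set A : ℝ := n ^ 2 + 2 * ⟪x, v⟫ + b ^ 2 with hA
    have h1 : ‖x + v‖ ^ 2 ≤ A := by
      rw [norm_add_sq_real]
      have : ‖v‖ ^ 2 ≤ b ^ 2 := by nlinarith [norm_nonneg v]
      nlinarith
    have hQ : (n - b) ^ 2 ≤ A := by nlinarith
    have hP : A ≤ (n + b) ^ 2 := by nlinarith
    have hQ0 : (0:ℝ) ≤ (n - b) ^ 2 := sq_nonneg _
    have step1 : Real.cosh ‖x + v‖ ≤ Real.cosh (Real.sqrt A) := by
      rw [Real.cosh_le_cosh, abs_of_nonneg (norm_nonneg _),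
        abs_of_nonneg (Real.sqrt_nonneg _)]
      calc ‖x + v‖ = Real.sqrt (‖x + v‖ ^ 2) := (Real.sqrt_sq (norm_nonneg _)).symm
        _ ≤ Real.sqrt A := Real.sqrt_le_sqrt h1
    have step2 := cosh_sqrt_chord hQ0 hQ hP
    rw [Real.sqrt_sq_eq_abs] at step2
    have hsq : Real.sqrt ((n + b) ^ 2) = n + b := Real.sqrt_sq (by positivity)
    rw [hsq] at step2
    have hcabs : Real.cosh |n - b| = Real.cosh (n - b) := by
      rcases abs_cases (n - b) with ⟨h, _⟩ | ⟨h, _⟩ <;> rw [h]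
      rw [Real.cosh_neg]
    rw [hcabs] at step2
    have hd : (0:ℝ) < (n + b) ^ 2 - (n - b) ^ 2 := by nlinarith
    have step3 : Real.cosh (Real.sqrt A) ≤
        (((n + b) ^ 2 - A) * Real.cosh (n - b) + (A - (n - b) ^ 2) * Real.cosh (n + b)) /
          ((n + b) ^ 2 - (n - b) ^ 2) := by
      rw [le_div_iff₀ hd]
      linarith [step2]
    have heq : (((n + b) ^ 2 - A) * Real.cosh (n - b) + (A - (n - b) ^ 2) * Real.cosh (n + b)) /
          ((n + b) ^ 2 - (n - b) ^ 2)
        = Real.cosh n * Real.cosh b + ⟪x, v⟫ * (Real.sinh n * Real.sinh b / (n * b)) := by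
      rw [Real.cosh_add, Real.cosh_sub]
      have hnb : n * b ≠ 0 := by positivity
      field_simp
      ring
    exact step1.trans (step3.trans_eq heq)

open RealInnerProductSpace in
lemma integral_cosh_norm_add_le {H : Type*} [NormedAddCommGroup H] [InnerProductSpace ℝ H]
    [CompleteSpace H]
    {Ω : Type*} [MeasurableSpace Ω] (μ : Measure Ω) [IsProbabilityMeasure μ]
    {Y : Ω → H} (hY : Integrable Y μ) (hY0 : ∫ ω, Y ω ∂μ = 0)
    {b : ℝ} (hb : 0 < b) (hbd : ∀ᵐ ω ∂μ, ‖Y ω‖ ≤ b) (x : H) :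
    ∫ ω, Real.cosh ‖x + Y ω‖ ∂μ ≤ Real.cosh ‖x‖ * Real.cosh b := by
  set C : ℝ := Real.sinh ‖x‖ * Real.sinh b / (‖x‖ * b) with hC
  have hasm : AEStronglyMeasurable (fun ω => Real.cosh ‖x + Y ω‖) μ := by
    exact (Real.continuous_cosh.comp
      (continuous_norm.comp (continuous_const.add continuous_id))).comp_aestronglyMeasurable hY.1
  have hil : Integrable (fun ω => Real.cosh ‖x + Y ω‖) μ := by
    refine Integrable.mono' (integrable_const (Real.cosh (‖x‖ + b))) hasm ?_
    filter_upwards [hbd] with ω hω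
    rw [Real.norm_eq_abs, abs_of_nonneg (Real.cosh_pos _).le, Real.cosh_le_cosh,
      abs_of_nonneg (norm_nonneg _), abs_of_nonneg (by positivity)]
    exact (norm_add_le _ _).trans (by linarith)
  have hiInner : Integrable (fun ω => ⟪x, Y ω⟫) μ := (innerSL ℝ x).integrable_comp hY
  have hiR : Integrable (fun ω => Real.cosh ‖x‖ * Real.cosh b + ⟪x, Y ω⟫ * C) μ :=
    (integrable_const _).add (hiInner.mul_const C)
  have hle : ∫ ω, Real.cosh ‖x + Y ω‖ ∂μ ≤
      ∫ ω, (Real.cosh ‖x‖ * Real.cosh b + ⟪x, Y ω⟫ * C) ∂μ := by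
    refine integral_mono_ae hil hiR ?_
    filter_upwards [hbd] with ω hω
    exact cosh_norm_add_le x (Y ω) hb hω
  refine hle.trans_eq ?_
  rw [integral_add (integrable_const _) (hiInner.mul_const C),
    integral_const, probReal_univ, one_smul, integral_mul_const]
  have : ∫ ω, ⟪x, Y ω⟫ ∂μ = ⟪x, ∫ ω, Y ω ∂μ⟫ := integral_inner hY x
  rw [this, hY0, inner_zero_right, zero_mul, add_zero]

open ProbabilityTheory in
lemma integral_cosh_norm_sum_le {H : Type*} [NormedAddCommGroup H] [InnerProductSpace ℝ H]
    [CompleteSpace H] [SecondCountableTopology H] [MeasurableSpace H] [BorelSpace H]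
    {Ω : Type*} [MeasurableSpace Ω] (P : Measure Ω) [IsProbabilityMeasure P]
    {m : ℕ} {Y : Fin m → Ω → H} (hmeas : ∀ i, Measurable (Y i))
    (hindep : iIndepFun Y P)
    (hint : ∀ i, Integrable (Y i) P) (h0 : ∀ i, ∫ ω, Y i ω ∂P = 0)
    {b : ℝ} (hb : 0 < b) (hbd : ∀ i, ∀ᵐ ω ∂P, ‖Y i ω‖ ≤ b) (s : Finset (Fin m)) :
    ∫ ω, Real.cosh ‖∑ i ∈ s, Y i ω‖ ∂P ≤ Real.cosh b ^ s.card := by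
  classical
  induction s using Finset.induction_on with
  | empty => simp
  | insert a s ha IH =>
    set T : Ω → H := fun ω => ∑ i ∈ s, Y i ω with hT
    have hTmeas : Measurable T := Finset.measurable_sum s (fun i _ => hmeas i)
    have hsumfun : (∑ i ∈ s, Y i) = T := by ext ω; simp [hT, Finset.sum_apply]
    have hIndep : IndepFun T (Y a) P := by
      have := hindep.indepFun_finsetSum_of_notMem hmeas ha
      rwa [hsumfun] at this
    have hmap : P.map (fun ω => (T ω, Y a ω)) = (P.map T).prod (P.map (Y a)) :=
      (ProbabilityTheory.indepFun_iff_map_prod_eq_prod_map_map hTmeas.aemeasurable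
        (hmeas a).aemeasurable).mp hIndep
    set ν₁ := P.map T with hν₁
    set ν₂ := P.map (Y a) with hν₂
    haveI : IsProbabilityMeasure ν₁ := Measure.isProbabilityMeasure_map hTmeas.aemeasurable
    haveI : IsProbabilityMeasure ν₂ := Measure.isProbabilityMeasure_map (hmeas a).aemeasurable
    have hbT : ∀ᵐ ω ∂P, ‖T ω‖ ≤ s.card * b := by
      have h1 : ∀ᵐ ω ∂P, ∀ i ∈ (s : Set (Fin m)), ‖Y i ω‖ ≤ b :=
        (ae_ball_iff (s : Set (Fin m)).to_countable).mpr (fun i _ => hbd i)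
      filter_upwards [h1] with ω hω
      calc ‖T ω‖ ≤ ∑ i ∈ s, ‖Y i ω‖ := norm_sum_le _ _
        _ ≤ ∑ _i ∈ s, b := Finset.sum_le_sum (fun i hi => hω i hi)
        _ = s.card * b := by simp [Finset.sum_const, nsmul_eq_mul]
    have hbT' : ∀ᵐ t ∂ν₁, ‖t‖ ≤ s.card * b :=
      (ae_map_iff hTmeas.aemeasurable (measurableSet_le measurable_norm measurable_const)).mpr hbT
    have hbA' : ∀ᵐ u ∂ν₂, ‖u‖ ≤ b :=
      (ae_map_iff (hmeas a).aemeasurable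
        (measurableSet_le measurable_norm measurable_const)).mpr (hbd a)
    have hcont : Continuous (fun p : H × H => Real.cosh ‖p.1 + p.2‖) :=
      Real.continuous_cosh.comp (continuous_norm.comp (continuous_fst.add continuous_snd))
    have hFasm : AEStronglyMeasurable (fun p : H × H => Real.cosh ‖p.1 + p.2‖) (ν₁.prod ν₂) :=
      hcont.aestronglyMeasurable
    have hprodae : ∀ᵐ p ∂(ν₁.prod ν₂), ‖p.1‖ ≤ s.card * b ∧ ‖p.2‖ ≤ b := by
      have h1 : ∀ᵐ p ∂(ν₁.prod ν₂), ‖p.1‖ ≤ s.card * b := by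
        rw [ae_iff]
        have he : {p : H × H | ¬ ‖p.1‖ ≤ s.card * b} = {t : H | ¬ ‖t‖ ≤ s.card * b} ×ˢ Set.univ := by
          ext p; simp
        rw [he, Measure.prod_prod]
        have := ae_iff.mp hbT'
        rw [this, zero_mul]
      have h2 : ∀ᵐ p ∂(ν₁.prod ν₂), ‖p.2‖ ≤ b := by
        rw [ae_iff]
        have he : {p : H × H | ¬ ‖p.2‖ ≤ b} = Set.univ ×ˢ {u : H | ¬ ‖u‖ ≤ b} := by
          ext p; simp
        rw [he, Measure.prod_prod]
        have := ae_iff.mp hbA'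
        rw [this, mul_zero]
      filter_upwards [h1, h2] with p hp1 hp2
      exact ⟨hp1, hp2⟩
    have hFint : Integrable (fun p : H × H => Real.cosh ‖p.1 + p.2‖) (ν₁.prod ν₂) := by
      refine Integrable.mono' (integrable_const (Real.cosh (s.card * b + b))) hFasm ?_
      filter_upwards [hprodae] with p hp
      rw [Real.norm_eq_abs, abs_of_nonneg (Real.cosh_pos _).le, Real.cosh_le_cosh,
        abs_of_nonneg (norm_nonneg _), abs_of_nonneg (by positivity)]
      exact (norm_add_le _ _).trans (add_le_add hp.1 hp.2)
    have hid : Integrable (fun u : H => u) ν₂ :=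
      (integrable_map_measure aestronglyMeasurable_id (hmeas a).aemeasurable).mpr (hint a)
    have hid0 : ∫ u, u ∂ν₂ = 0 := by
      have h : ∫ u : H, u ∂(P.map (Y a)) = ∫ ω, Y a ω ∂P :=
        integral_map (hmeas a).aemeasurable aestronglyMeasurable_id
      rw [hν₂, h]
      exact h0 a
    have hnormasm : AEStronglyMeasurable (fun t : H => Real.cosh ‖t‖) ν₁ :=
      (Real.continuous_cosh.comp continuous_norm).aestronglyMeasurable
    have hrhs_int : Integrable (fun t : H => Real.cosh ‖t‖ * Real.cosh b) ν₁ := by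
      refine Integrable.mul_const ?_ _
      refine Integrable.mono' (integrable_const (Real.cosh (s.card * b))) hnormasm ?_
      filter_upwards [hbT'] with t ht
      rw [Real.norm_eq_abs, abs_of_nonneg (Real.cosh_pos _).le, Real.cosh_le_cosh,
        abs_of_nonneg (norm_nonneg _), abs_of_nonneg (by positivity)]
      exact ht
    have hrw : ∀ ω, (∑ i ∈ insert a s, Y i ω) = T ω + Y a ω := fun ω => by
      rw [Finset.sum_insert ha]; exact add_comm _ _
    calc ∫ ω, Real.cosh ‖∑ i ∈ insert a s, Y i ω‖ ∂P
        = ∫ ω, Real.cosh ‖T ω + Y a ω‖ ∂P := by simp_rw [hrw]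
      _ = ∫ p, Real.cosh ‖p.1 + p.2‖ ∂(P.map (fun ω => (T ω, Y a ω))) := by
          rw [integral_map (hTmeas.aemeasurable.prodMk (hmeas a).aemeasurable)
            hcont.aestronglyMeasurable]
      _ = ∫ p, Real.cosh ‖p.1 + p.2‖ ∂(ν₁.prod ν₂) := by rw [hmap]
      _ = ∫ t, ∫ u, Real.cosh ‖t + u‖ ∂ν₂ ∂ν₁ := integral_prod _ hFint
      _ ≤ ∫ t, Real.cosh ‖t‖ * Real.cosh b ∂ν₁ := by
          refine integral_mono_ae hFint.integral_prod_left hrhs_int (ae_of_all _ (fun t => ?_))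
          exact integral_cosh_norm_add_le ν₂ hid hid0 hb hbA' t
      _ = (∫ t, Real.cosh ‖t‖ ∂ν₁) * Real.cosh b := integral_mul_const _ _
      _ = (∫ ω, Real.cosh ‖T ω‖ ∂P) * Real.cosh b := by
          have h2 : ∫ t : H, Real.cosh ‖t‖ ∂(P.map T) = ∫ ω, Real.cosh ‖T ω‖ ∂P :=
            integral_map hTmeas.aemeasurable
              ((Real.continuous_cosh.comp continuous_norm :
                Continuous fun t : H => Real.cosh ‖t‖).aestronglyMeasurable)
          rw [hν₁, h2]
      _ ≤ Real.cosh b ^ s.card * Real.cosh b :=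
          mul_le_mul_of_nonneg_right IH (Real.cosh_pos _).le
      _ = Real.cosh b ^ (insert a s).card := by
          rw [Finset.card_insert_of_notMem ha, pow_succ]

/-- Let `H` be a separable real Hilbert space and `X₁, …, X_m` i.i.d. Bochner-integrable
`H`-valued random variables with `‖X_r‖ ≤ c` almost surely.  Then for every `ε > 0`:
`P(‖(1/m) Σ_r X_r − E[X₁]‖ > ε) ≤ 2 exp(−m ε²/(8 c²))`. -/
theorem hilbert_space_hoeffding
    {Ω : Type*} [MeasurableSpace Ω] (P : Measure Ω) [IsProbabilityMeasure P]
    {H : Type*} [NormedAddCommGroup H] [InnerProductSpace ℝ H] [CompleteSpace H]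
    [SecondCountableTopology H] [MeasurableSpace H] [BorelSpace H]
    (m : ℕ) (hm : 0 < m) (X : Fin m → Ω → H)
    (hmeas : ∀ r, Measurable (X r))
    (hindep : ProbabilityTheory.iIndepFun X P)
    (hident : ∀ r, Measure.map (X r) P = Measure.map (X ⟨0, hm⟩) P)
    (hint : ∀ r, Integrable (X r) P)
    (c : ℝ) (hc : 0 < c) (hbdd : ∀ r, ∀ᵐ ω ∂P, ‖X r ω‖ ≤ c) :
    ∀ ε > (0 : ℝ),
      P {ω | ‖(m : ℝ)⁻¹ • (∑ r, X r ω) - ∫ ω', X ⟨0, hm⟩ ω' ∂P‖ > ε} ≤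
        ENNReal.ofReal (2 * Real.exp (-(m * ε ^ 2) / (8 * c ^ 2))) := by
  intro ε hε
  set μ0 : H := ∫ ω', X ⟨0, hm⟩ ω' ∂P with hμ0
  have hmne : (m : ℝ) ≠ 0 := Nat.cast_ne_zero.mpr hm.ne'
  have hmpos : (0:ℝ) < m := Nat.cast_pos.mpr hm
  have hmean : ∀ i, ∫ ω, X i ω ∂P = μ0 := by
    intro i
    have h1 : ∫ y : H, y ∂(P.map (X i)) = ∫ ω, X i ω ∂P :=
      integral_map (hmeas i).aemeasurable aestronglyMeasurable_id
    have h2 : ∫ y : H, y ∂(P.map (X ⟨0, hm⟩)) = ∫ ω, X ⟨0, hm⟩ ω ∂P :=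
      integral_map (hmeas _).aemeasurable aestronglyMeasurable_id
    rw [hμ0, ← h1, ← h2, hident i]
  have hμ0n : ‖μ0‖ ≤ c := by
    rw [hμ0]
    calc ‖∫ ω', X ⟨0, hm⟩ ω' ∂P‖ ≤ ∫ ω', ‖X ⟨0, hm⟩ ω'‖ ∂P := norm_integral_le_integral_norm _
      _ ≤ ∫ (_ : Ω), c ∂P := integral_mono_ae (hint _).norm (integrable_const c) (hbdd _)
      _ = c := by simp
  set lam : ℝ := ε / (4 * c ^ 2) with hlam
  have hlam0 : 0 < lam := by positivity
  set b : ℝ := lam * (2 * c) with hbdef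
  have hb0 : 0 < b := by positivity
  set Y : Fin m → Ω → H := fun i ω => lam • (X i ω - μ0) with hYdef
  have hYmeas : ∀ i, Measurable (Y i) :=
    fun i => ((hmeas i).sub measurable_const).const_smul lam
  have hYindep : ProbabilityTheory.iIndepFun Y P := by
    have := hindep.comp (fun _ => fun v : H => lam • (v - μ0))
      (fun _ => (measurable_id.sub measurable_const).const_smul lam)
    exact this
  have hYint : ∀ i, Integrable (Y i) P :=
    fun i => (((hint i).sub (integrable_const μ0)).smul lam)
  have hY0 : ∀ i, ∫ ω, Y i ω ∂P = 0 := by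
    intro i
    simp only [hYdef]
    rw [integral_smul, integral_sub (hint i) (integrable_const μ0), integral_const,
      probReal_univ, one_smul, hmean i, sub_self, smul_zero]
  have hYbd : ∀ i, ∀ᵐ ω ∂P, ‖Y i ω‖ ≤ b := by
    intro i
    filter_upwards [hbdd i] with ω hω
    simp only [hYdef]
    rw [norm_smul, Real.norm_eq_abs, abs_of_nonneg hlam0.le, hbdef]
    have h1 : ‖X i ω - μ0‖ ≤ 2 * c := (norm_sub_le _ _).trans (by linarith)
    nlinarith [hlam0.le]
  have hkey := integral_cosh_norm_sum_le P hYmeas hYindep hYint hY0 hb0 hYbd Finset.univ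
  rw [Finset.card_univ, Fintype.card_fin] at hkey
  set S : Ω → H := fun ω => ∑ i, Y i ω with hSdef
  have hSmeas : Measurable S := Finset.measurable_sum _ (fun i _ => hYmeas i)
  have hsub : {ω | ‖(m : ℝ)⁻¹ • (∑ r, X r ω) - μ0‖ > ε} ⊆
      {ω | Real.cosh (lam * m * ε) ≤ Real.cosh ‖S ω‖} := by
    intro ω hω
    simp only [Set.mem_setOf_eq] at hω ⊢
    have hSω : S ω = (lam * m) • ((m : ℝ)⁻¹ • (∑ r, X r ω) - μ0) := by
      simp only [hSdef, hYdef]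
      rw [← Finset.smul_sum, Finset.sum_sub_distrib, Finset.sum_const, Finset.card_univ,
        Fintype.card_fin, ← Nat.cast_smul_eq_nsmul ℝ m μ0]
      match_scalars
      · field_simp
      · ring
    have hnorm : ‖S ω‖ = lam * m * ‖(m : ℝ)⁻¹ • (∑ r, X r ω) - μ0‖ := by
      rw [hSω, norm_smul, Real.norm_eq_abs, abs_of_nonneg (by positivity)]
    rw [Real.cosh_le_cosh, abs_of_nonneg (by positivity), abs_of_nonneg (norm_nonneg _), hnorm]
    have : 0 < lam * m := by positivity
    nlinarith
  have hSbd : ∀ᵐ ω ∂P, ‖S ω‖ ≤ m * b := by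
    have h1 : ∀ᵐ ω ∂P, ∀ i ∈ ((Finset.univ : Finset (Fin m)) : Set (Fin m)), ‖Y i ω‖ ≤ b :=
      (ae_ball_iff ((Finset.univ : Finset (Fin m)) : Set (Fin m)).to_countable).mpr
        (fun i _ => hYbd i)
    filter_upwards [h1] with ω hω
    calc ‖S ω‖ ≤ ∑ i, ‖Y i ω‖ := norm_sum_le _ _
      _ ≤ ∑ _i : Fin m, b := Finset.sum_le_sum (fun i _ => hω i (by simp))
      _ = m * b := by simp [Finset.sum_const, nsmul_eq_mul]
  have hSint : Integrable (fun ω => Real.cosh ‖S ω‖) P := by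
    refine Integrable.mono'
      (integrable_const (Real.cosh (m * b)))
      (((Real.continuous_cosh.comp continuous_norm).measurable.comp
        hSmeas).aestronglyMeasurable) ?_
    filter_upwards [hSbd] with ω hω
    rw [Real.norm_eq_abs, abs_of_nonneg (Real.cosh_pos _).le, Real.cosh_le_cosh,
      abs_of_nonneg (norm_nonneg _), abs_of_nonneg (by positivity)]
    exact hω
  have hmarkov := mul_meas_ge_le_integral_of_nonneg
    (ae_of_all _ (fun ω => (Real.cosh_pos ‖S ω‖).le)) hSint (Real.cosh (lam * m * ε))
  set K : ℝ := Real.cosh (lam * m * ε) with hKdef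
  have hKpos : 0 < K := Real.cosh_pos _
  have hK : Real.exp (lam * m * ε) / 2 ≤ K := by
    rw [hKdef, Real.cosh_eq]
    have := (Real.exp_pos (-(lam * m * ε))).le
    linarith
  have htoReal : (P {ω | ‖(m : ℝ)⁻¹ • (∑ r, X r ω) - μ0‖ > ε}).toReal ≤
      (P {ω | K ≤ Real.cosh ‖S ω‖}).toReal :=
    ENNReal.toReal_mono (measure_ne_top _ _) (measure_mono hsub)
  have h3 : (P {ω | K ≤ Real.cosh ‖S ω‖}).toReal ≤ Real.cosh b ^ m / K := by
    rw [le_div_iff₀ hKpos]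
    calc (P {ω | K ≤ Real.cosh ‖S ω‖}).toReal * K
        = K * (P {ω | K ≤ Real.cosh ‖S ω‖}).toReal := mul_comm _ _
      _ ≤ ∫ ω, Real.cosh ‖S ω‖ ∂P := hmarkov
      _ ≤ Real.cosh b ^ m := hkey
  have h4 : Real.cosh b ^ m ≤ Real.exp ((m : ℝ) * (2 * lam ^ 2 * c ^ 2)) := by
    calc Real.cosh b ^ m ≤ Real.exp (b ^ 2 / 2) ^ m :=
          pow_le_pow_left₀ (Real.cosh_pos _).le (Real.cosh_le_exp_half_sq b) m
      _ = Real.exp ((m : ℝ) * (b ^ 2 / 2)) := by rw [← Real.exp_nat_mul]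
      _ = Real.exp ((m : ℝ) * (2 * lam ^ 2 * c ^ 2)) := by
          congr 1
          rw [hbdef]
          ring
  have h5 : Real.cosh b ^ m / K ≤
      Real.exp ((m : ℝ) * (2 * lam ^ 2 * c ^ 2)) / (Real.exp (lam * m * ε) / 2) :=
    div_le_div₀ (Real.exp_pos _).le h4 (by positivity) hK
  have heq : Real.exp ((m : ℝ) * (2 * lam ^ 2 * c ^ 2)) / (Real.exp (lam * m * ε) / 2) =
      2 * Real.exp (-((m : ℝ) * ε ^ 2) / (8 * c ^ 2)) := by
    rw [div_div_eq_mul_div, mul_comm, mul_div_assoc, ← Real.exp_sub]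
    congr 2
    rw [hlam]
    field_simp
    ring
  refine (ENNReal.le_ofReal_iff_toReal_le (measure_ne_top P _) (by positivity)).mpr ?_
  calc (P {ω | ‖(m : ℝ)⁻¹ • (∑ r, X r ω) - μ0‖ > ε}).toReal
      ≤ (P {ω | K ≤ Real.cosh ‖S ω‖}).toReal := htoReal
    _ ≤ Real.cosh b ^ m / K := h3
    _ ≤ Real.exp ((m : ℝ) * (2 * lam ^ 2 * c ^ 2)) / (Real.exp (lam * m * ε) / 2) := h5
    _ = 2 * Real.exp (-((m : ℝ) * ε ^ 2) / (8 * c ^ 2)) := heq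
end
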